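/- Let n be a natural number with n ≥ 1, let g : ℝ → ℝ be differentiable, and let b, k ∈ ℝ. Suppose u : ℝ → ℝ → ℝ is C² on ℝ × (0,∞), u_r(t,r) ≠ 0 for all t ∈ ℝ and r > 0, and u satisfies the radial generalized p-Laplacian diffusion–reaction equation u_t(t,r) = (g(|u_r(t,r)|) + |u_r(t,r)|·g'(|u_r(t,r)|))·u_rr(t,r) + ((n−1)/r)·g(|u_r(t,r)|)·u_r(t,r) + b + k·u(t,r) for all t ∈ ℝ and r > 0. Define T(t,r) = r^(n−1)·exp(−k·t)·u(t,r) and X(t,r) = −r^(n−1)·exp(−k·t)·(u_r(t,r)·g(|u_r(t,r)|) + (b/n)·r). Then ∂T/∂t(t,r) + ∂X/∂r(t,r) = 0 for all t ∈ ℝ and r > 0. -/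

import Mathlib

noncomputable section

/-- Partial derivative in the first (time) variable. -/
def partial_t (u : ℝ → ℝ → ℝ) (t r : ℝ) : ℝ := deriv (fun s => u s r) t

/-- Partial derivative in the second (space) variable. -/
def partial_r (u : ℝ → ℝ → ℝ) (t r : ℝ) : ℝ := deriv (fun s => u t s) r

/-- Second partial derivative in the second (space) variable. -/
def partial_rr (u : ℝ → ℝ → ℝ) (t r : ℝ) : ℝ := deriv (deriv (fun s => u t s)) r

/-- Mixed partial derivative: first in space, then in time. -/
def partial_tr (u : ℝ → ℝ → ℝ) (t r : ℝ) : ℝ := deriv (fun s => deriv (fun y => u s y) r) t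

/-- `u` is C² on ℝ × (0,∞): `u`, `u_t`, `u_r`, `u_rr` and the mixed partial `u_tr`
exist and are continuous there. -/
def IsC2On (u : ℝ → ℝ → ℝ) : Prop :=
  (∀ t r : ℝ, 0 < r → DifferentiableAt ℝ (fun s => u s r) t) ∧
  (∀ t r : ℝ, 0 < r → DifferentiableAt ℝ (fun s => u t s) r) ∧
  (∀ t r : ℝ, 0 < r → DifferentiableAt ℝ (deriv (fun s => u t s)) r) ∧
  (∀ t r : ℝ, 0 < r → DifferentiableAt ℝ (fun s => deriv (fun y => u s y) r) t) ∧
  ContinuousOn (fun q : ℝ × ℝ => u q.1 q.2) {q : ℝ × ℝ | 0 < q.2} ∧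
  ContinuousOn (fun q : ℝ × ℝ => partial_t u q.1 q.2) {q : ℝ × ℝ | 0 < q.2} ∧
  ContinuousOn (fun q : ℝ × ℝ => partial_r u q.1 q.2) {q : ℝ × ℝ | 0 < q.2} ∧
  ContinuousOn (fun q : ℝ × ℝ => partial_rr u q.1 q.2) {q : ℝ × ℝ | 0 < q.2} ∧
  ContinuousOn (fun q : ℝ × ℝ => partial_tr u q.1 q.2) {q : ℝ × ℝ | 0 < q.2}

/-- Mass conservation law of the radial generalized p-Laplacian diffusion-reaction
equation with source `f(u) = b + k·u`. -/
theorem radial_conservation_law_mass (n : ℕ) (hn : 1 ≤ n)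
    (g : ℝ → ℝ) (hg : Differentiable ℝ g) (b k : ℝ)
    (u : ℝ → ℝ → ℝ) (hu : IsC2On u)
    (hur : ∀ t r : ℝ, 0 < r → partial_r u t r ≠ 0)
    (hpde : ∀ t r : ℝ, 0 < r →
      partial_t u t r
        = (g |partial_r u t r| + |partial_r u t r| * deriv g |partial_r u t r|)
            * partial_rr u t r
          + (((n : ℝ) - 1) / r) * g |partial_r u t r| * partial_r u t r
          + b + k * u t r)
    (T X : ℝ → ℝ → ℝ)
    (hT : ∀ t r : ℝ, T t r = r ^ (n - 1) * Real.exp (-k * t) * u t r)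
    (hX : ∀ t r : ℝ, X t r
      = -(r ^ (n - 1) * Real.exp (-k * t)
          * (partial_r u t r * g |partial_r u t r| + (b / (n : ℝ)) * r))) :
    ∀ t r : ℝ, 0 < r → partial_t T t r + partial_r X t r = 0 := by
  intro t r hr
  have hrne : r ≠ 0 := ne_of_gt hr
  obtain ⟨m, rfl⟩ : ∃ m, n = m + 1 := ⟨n - 1, by omega⟩
  simp only [Nat.add_sub_cancel] at hT hX hpde
  obtain ⟨hUt, hUr, hUrr, hUtr, _⟩ := hu
  set e := Real.exp (-k * t) with he
  set A := partial_r u t r with hA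
  set Urr := partial_rr u t r with hUrrdef
  set sgn := (SignType.sign A : ℝ) with hsgn
  have hAne : A ≠ 0 := hur t r hr
  -- derivative of T in time
  have h1 : HasDerivAt (fun s => Real.exp (-k * s)) (e * (-k)) t := by
    have hinner : HasDerivAt (fun s : ℝ => -k * s) (-k) t := by
      simpa using (hasDerivAt_id t).const_mul (-k)
    have := (Real.hasDerivAt_exp (-k * t)).comp t hinner
    simpa [he, Function.comp_def, mul_comm] using this
  have h2 : HasDerivAt (fun s => u s r) (partial_t u t r) t :=
    (hUt t r hr).hasDerivAt
  have hTd : HasDerivAt (fun s => T s r)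
      (r ^ m * (e * (-k)) * u t r + r ^ m * e * partial_t u t r) t := by
    have h3 := ((h1.const_mul (r ^ m)).mul h2)
    have hfun : (fun s => T s r) = fun s => r ^ m * Real.exp (-k * s) * u s r := by
      funext s; rw [hT]
    rw [hfun]
    exact h3
  -- derivative of X in space
  have hw : HasDerivAt (fun s => partial_r u t s) Urr r := (hUrr t r hr).hasDerivAt
  have habs : HasDerivAt (fun s => |partial_r u t s|) (sgn * Urr) r := by
    have h4 : HasDerivAt (fun x : ℝ => |x|) sgn A := hasDerivAt_abs hAne
    have := h4.comp r hw
    simpa [Function.comp_def, mul_comm] using this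
  have hgabs : HasDerivAt (fun s => g |partial_r u t s|)
      (deriv g |A| * (sgn * Urr)) r := by
    have := ((hg |A|).hasDerivAt).comp r habs
    simpa [Function.comp_def, mul_comm, mul_assoc, mul_left_comm] using this
  have hprod : HasDerivAt
      (fun s => partial_r u t s * g |partial_r u t s| + b / ((m : ℝ) + 1) * s)
      (Urr * g |A| + A * (deriv g |A| * (sgn * Urr)) + b / ((m : ℝ) + 1)) r := by
    have := (hw.mul hgabs).add ((hasDerivAt_id r).const_mul (b / ((m : ℝ) + 1)))
    simpa [mul_comm, Pi.mul_def, Pi.add_def] using this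
  have hP : HasDerivAt (fun s : ℝ => s ^ m * e) ((m : ℝ) * r ^ (m - 1) * e) r := by
    simpa using (hasDerivAt_pow m r).mul_const e
  have hcast : ((m + 1 : ℕ) : ℝ) = (m : ℝ) + 1 := by push_cast; ring
  have hXd : HasDerivAt (fun s => X t s)
      (-((m : ℝ) * r ^ (m - 1) * e * (A * g |A| + b / ((m : ℝ) + 1) * r)
         + r ^ m * e * (Urr * g |A| + A * (deriv g |A| * (sgn * Urr)) + b / ((m : ℝ) + 1)))) r := by
    have h5 := (hP.mul hprod).neg
    have hfun : (fun s => X t s)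
        = fun s => -(s ^ m * e
            * (partial_r u t s * g |partial_r u t s| + b / ((m : ℝ) + 1) * s)) := by
      funext s; rw [hX, hcast]
    rw [hfun]
    exact h5
  have hTv : partial_t T t r
      = r ^ m * (e * (-k)) * u t r + r ^ m * e * partial_t u t r := hTd.deriv
  have hXv : partial_r X t r
      = -((m : ℝ) * r ^ (m - 1) * e * (A * g |A| + b / ((m : ℝ) + 1) * r)
         + r ^ m * e * (Urr * g |A| + A * (deriv g |A| * (sgn * Urr)) + b / ((m : ℝ) + 1))) :=
    hXd.deriv
  have hAsgn : A * sgn = |A| := self_mul_sign A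
  have hpde' : partial_t u t r
      = (g |A| + |A| * deriv g |A|) * Urr + (((m : ℝ) + 1 - 1) / r) * g |A| * A
        + b + k * u t r := by
    have := hpde t r hr
    rwa [hcast] at this
  rw [hTv, hXv, hpde']
  have hAG : A * (deriv g |A| * (sgn * Urr)) = |A| * deriv g |A| * Urr := by
    calc A * (deriv g |A| * (sgn * Urr)) = (A * sgn) * deriv g |A| * Urr := by ring
    _ = |A| * deriv g |A| * Urr := by rw [hAsgn]
  rw [hAG]
  rcases Nat.eq_zero_or_pos m with hm0 | hm1
  · subst hm0
    simp only [Nat.cast_zero, pow_zero, Nat.zero_sub, zero_mul]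
    field_simp
    ring
  · obtain ⟨m', rfl⟩ : ∃ m', m = m' + 1 := ⟨m - 1, by omega⟩
    have hpow1 : r ^ (m' + 1 - 1) = r ^ m' := by norm_num
    have hpow2 : r ^ (m' + 1) = r ^ m' * r := pow_succ r m'
    rw [hpow1, hpow2]
    have hne : (m' : ℝ) + 1 + 1 ≠ 0 := by positivity
    field_simp
    ring
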